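/- Let F_1, …, F_q be n×n sub-stochastic matrices, each having all diagonal entries strictly positive. Suppose that for every index i₂ ∈ {1,…,n} there exist indices 1 ≤ s₁ < s₂ ≤ q and i₁ ∈ {1,…,n} such that the i₁-th row sum of F_{s₁} is strictly less than 1 and the (i₂,i₁) entry of F_{s₂} is strictly positive. Then the infinity norm of the product F_q ⋯ F_2 F_1 is strictly less than 1, and hence its spectral radius is strictly less than 1. -/

import Mathlib

/-- A real square matrix is sub-stochastic if it is entrywise nonnegative and
every row sum is at most `1`. -/
def SubStochastic {n : ℕ} (F : Matrix (Fin n) (Fin n) ℝ) : Prop :=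
  (∀ i j, 0 ≤ F i j) ∧ (∀ i, ∑ j, F i j ≤ 1)

/-- Maximum absolute row sum norm. -/
noncomputable def infNorm {m : Type*} [Fintype m] (M : Matrix m m ℝ) : ℝ :=
  ⨆ i, ∑ j, |M i j|

/-- The spectral radius of a real square matrix. -/
noncomputable def specRad {n : ℕ} (M : Matrix (Fin n) (Fin n) ℝ) : ℝ :=
  ⨆ μ : spectrum ℂ (M.map (algebraMap ℝ ℂ)), ‖(μ : ℂ)‖

namespace SubStochasticAux

variable {n : ℕ}

/-- Partial products `G (t-1) * ⋯ * G 0`. -/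
def pprod (G : ℕ → Matrix (Fin n) (Fin n) ℝ) : ℕ → Matrix (Fin n) (Fin n) ℝ
  | 0 => 1
  | t + 1 => G t * pprod G t

lemma pprod_congr {G G' : ℕ → Matrix (Fin n) (Fin n) ℝ} :
    ∀ m : ℕ, (∀ t < m, G t = G' t) → pprod G m = pprod G' m
  | 0, _ => rfl
  | m + 1, h => by
    rw [pprod, pprod, h m (Nat.lt_succ_self m),
      pprod_congr m fun t ht => h t (ht.trans (Nat.lt_succ_self m))]

lemma ofFn_reverse_prod : ∀ (q : ℕ) (F : Fin q → Matrix (Fin n) (Fin n) ℝ),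
    (List.ofFn F).reverse.prod =
      pprod (fun t => if h : t < q then F ⟨t, h⟩ else 1) q
  | 0, _ => by simp [pprod]
  | q + 1, F => by
    rw [List.ofFn_succ', List.concat_eq_append, List.reverse_append, List.reverse_singleton,
      List.singleton_append, List.prod_cons, ofFn_reverse_prod q (fun i => F i.castSucc), pprod]
    congr 1
    · rw [dif_pos (Nat.lt_succ_self q)]
      rfl
    · refine pprod_congr q fun t ht => ?_
      simp [ht, ht.trans (Nat.lt_succ_self q), Fin.castSucc]

lemma subStochastic_one : SubStochastic (1 : Matrix (Fin n) (Fin n) ℝ) := by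
  constructor
  · intro i j
    by_cases h : i = j <;> simp [Matrix.one_apply, h]
  · intro i
    simp [Matrix.one_apply]

lemma rowSum_mul (A B : Matrix (Fin n) (Fin n) ℝ) (i : Fin n) :
    ∑ j, (A * B) i j = ∑ k, A i k * ∑ j, B k j := by
  simp only [Matrix.mul_apply, Finset.mul_sum]
  exact Finset.sum_comm

lemma subStochastic_mul {A B : Matrix (Fin n) (Fin n) ℝ}
    (hA : SubStochastic A) (hB : SubStochastic B) : SubStochastic (A * B) := by
  constructor
  · intro i j
    rw [Matrix.mul_apply]
    exact Finset.sum_nonneg fun k _ => mul_nonneg (hA.1 i k) (hB.1 k j)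
  · intro i
    rw [rowSum_mul]
    calc ∑ k, A i k * ∑ j, B k j ≤ ∑ k, A i k := by
          refine Finset.sum_le_sum fun k _ => ?_
          calc A i k * ∑ j, B k j ≤ A i k * 1 :=
                mul_le_mul_of_nonneg_left (hB.2 k) (hA.1 i k)
            _ = A i k := mul_one _
      _ ≤ 1 := hA.2 i

lemma diag_pos_mul {A B : Matrix (Fin n) (Fin n) ℝ}
    (hA : SubStochastic A) (hB : SubStochastic B)
    {i : Fin n} (hA' : 0 < A i i) (hB' : 0 < B i i) : 0 < (A * B) i i := by
  have : A i i * B i i ≤ (A * B) i i := by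
    rw [Matrix.mul_apply]
    exact Finset.single_le_sum (fun k _ => mul_nonneg (hA.1 i k) (hB.1 k i))
      (Finset.mem_univ i)
  exact lt_of_lt_of_le (mul_pos hA' hB') this

/-- Key strict inequality: if `A i₂ i₁ > 0` and row `i₁` of `M` is deficient, then
row `i₂` of `A * M` is deficient. -/
lemma rowSum_mul_lt {A M : Matrix (Fin n) (Fin n) ℝ}
    (hA : SubStochastic A) (hM : SubStochastic M) {i₂ i₁ : Fin n}
    (hpos : 0 < A i₂ i₁) (hdef : ∑ j, M i₁ j < 1) :
    ∑ j, (A * M) i₂ j < 1 := by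
  rw [rowSum_mul]
  calc ∑ k, A i₂ k * ∑ j, M k j < ∑ k, A i₂ k := by
        refine Finset.sum_lt_sum (fun k _ => ?_) ⟨i₁, Finset.mem_univ i₁, ?_⟩
        · calc A i₂ k * ∑ j, M k j ≤ A i₂ k * 1 :=
              mul_le_mul_of_nonneg_left (hM.2 k) (hA.1 i₂ k)
            _ = A i₂ k := mul_one _
        · calc A i₂ i₁ * ∑ j, M i₁ j < A i₂ i₁ * 1 :=
              mul_lt_mul_of_pos_left hdef hpos
            _ = A i₂ i₁ := mul_one _
    _ ≤ 1 := hA.2 i₂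

/-- If row `i₁` of `A` is deficient then so is row `i₁` of `A * M`. -/
lemma rowSum_mul_lt' {A M : Matrix (Fin n) (Fin n) ℝ}
    (hA : SubStochastic A) (hM : SubStochastic M) {i₁ : Fin n}
    (hdef : ∑ j, A i₁ j < 1) :
    ∑ j, (A * M) i₁ j < 1 := by
  rw [rowSum_mul]
  calc ∑ k, A i₁ k * ∑ j, M k j ≤ ∑ k, A i₁ k := by
        refine Finset.sum_le_sum fun k _ => ?_
        calc A i₁ k * ∑ j, M k j ≤ A i₁ k * 1 :=
            mul_le_mul_of_nonneg_left (hM.2 k) (hA.1 i₁ k)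
          _ = A i₁ k := mul_one _
    _ < 1 := hdef

end SubStochasticAux

open SubStochasticAux in
/-- Theorem 2.4(2): Let `F 0, …, F (q-1)` be `n × n` sub-stochastic matrices with
strictly positive diagonal entries. If for every index `i₂` there are
`s₁ < s₂` and an index `i₁` with the `i₁`-th row sum of `F s₁` strictly less
than `1` and `(F s₂) i₂ i₁ > 0`, then the product `F (q-1) ⋯ F 1 * F 0` has
infinity norm strictly less than `1`, and hence spectral radius strictly less
than `1`. -/
theorem subStochastic_prod_infNorm_lt_one {n q : ℕ}
    (F : Fin q → Matrix (Fin n) (Fin n) ℝ)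
    (hsub : ∀ s, SubStochastic (F s))
    (hdiag : ∀ s i, 0 < F s i i)
    (hkey : ∀ i₂ : Fin n, ∃ s₁ s₂ : Fin q, s₁ < s₂ ∧ ∃ i₁ : Fin n,
      (∑ j, F s₁ i₁ j) < 1 ∧ 0 < F s₂ i₂ i₁) :
    infNorm ((List.ofFn F).reverse.prod) < 1 ∧
      specRad ((List.ofFn F).reverse.prod) < 1 := by
  classical
  set G : ℕ → Matrix (Fin n) (Fin n) ℝ :=
    fun t => if h : t < q then F ⟨t, h⟩ else 1 with hG
  have hGsub : ∀ t, SubStochastic (G t) := by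
    intro t
    by_cases h : t < q <;> simp only [hG, h, dif_pos, dif_neg, not_false_iff]
    · exact hsub _
    · exact subStochastic_one
  have hGdiag : ∀ t i, 0 < G t i i := by
    intro t i
    by_cases h : t < q <;> simp only [hG, h, dif_pos, dif_neg, not_false_iff]
    · exact hdiag _ i
    · simp [Matrix.one_apply]
  -- the partial products are sub-stochastic with positive diagonal
  have hPsub : ∀ t, SubStochastic (pprod G t) := by
    intro t
    induction t with
    | zero => exact subStochastic_one
    | succ t ih => exact subStochastic_mul (hGsub t) ih
  have hPdiag : ∀ t i, 0 < (pprod G t) i i := by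
    intro t i
    induction t with
    | zero => simp [pprod, Matrix.one_apply]
    | succ t ih => exact diag_pos_mul (hGsub t) (hPsub t) (hGdiag t i) ih
  have hprod : (List.ofFn F).reverse.prod = pprod G q := ofFn_reverse_prod q F
  -- every row of the full product is deficient
  have hrow : ∀ i₂ : Fin n, ∑ j, (pprod G q) i₂ j < 1 := by
    intro i₂
    obtain ⟨s₁, s₂, hs, i₁, hdef, hpos⟩ := hkey i₂
    -- row i₁ of `pprod G (s₁+1+t)` is deficient
    have h1 : ∀ t : ℕ, ∑ j, (pprod G ((s₁ : ℕ) + 1 + t)) i₁ j < 1 := by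
      intro t
      induction t with
      | zero =>
        show ∑ j, (G s₁ * pprod G s₁) i₁ j < 1
        refine rowSum_mul_lt' (hGsub _) (hPsub _) ?_
        have : G (s₁ : ℕ) = F s₁ := by simp [hG, s₁.isLt]
        rw [this]; exact hdef
      | succ t ih =>
        have : (s₁ : ℕ) + 1 + (t + 1) = ((s₁ : ℕ) + 1 + t) + 1 := by omega
        rw [this]
        exact rowSum_mul_lt (hGsub _) (hPsub _) (hGdiag _ i₁) ih
    -- row i₂ of `pprod G (s₂+1)` is deficient
    have h2 : ∑ j, (pprod G ((s₂ : ℕ) + 1)) i₂ j < 1 := by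
      show ∑ j, (G s₂ * pprod G s₂) i₂ j < 1
      have hGs₂ : G (s₂ : ℕ) = F s₂ := by simp [hG, s₂.isLt]
      have hM : ∑ j, (pprod G (s₂ : ℕ)) i₁ j < 1 := by
        have he : (s₂ : ℕ) = (s₁ : ℕ) + 1 + ((s₂ : ℕ) - (s₁ : ℕ) - 1) := by
          have : (s₁ : ℕ) < (s₂ : ℕ) := hs
          omega
        rw [he]; exact h1 _
      refine rowSum_mul_lt (hGsub _) (hPsub _) ?_ hM
      rw [hGs₂]; exact hpos
    -- propagate to `pprod G (s₂+1+t)`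
    have h3 : ∀ t : ℕ, ∑ j, (pprod G ((s₂ : ℕ) + 1 + t)) i₂ j < 1 := by
      intro t
      induction t with
      | zero => exact h2
      | succ t ih =>
        have : (s₂ : ℕ) + 1 + (t + 1) = ((s₂ : ℕ) + 1 + t) + 1 := by omega
        rw [this]
        exact rowSum_mul_lt (hGsub _) (hPsub _) (hGdiag _ i₂) ih
    have he : q = (s₂ : ℕ) + 1 + (q - (s₂ : ℕ) - 1) := by
      have : (s₂ : ℕ) < q := s₂.isLt
      omega
    rw [he]; exact h3 _
  -- row sums of absolute values
  have habs : ∀ i : Fin n, ∑ j, |(pprod G q) i j| < 1 := by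
    intro i
    have : ∀ j, |(pprod G q) i j| = (pprod G q) i j := fun j =>
      abs_of_nonneg ((hPsub q).1 i j)
    calc ∑ j, |(pprod G q) i j| = ∑ j, (pprod G q) i j := by
          exact Finset.sum_congr rfl fun j _ => this j
      _ < 1 := hrow i
  have hinf : infNorm ((List.ofFn F).reverse.prod) < 1 := by
    rw [hprod]
    unfold infNorm
    rcases isEmpty_or_nonempty (Fin n) with hn | hn
    · rw [Real.iSup_of_isEmpty]; norm_num
    · obtain ⟨i₀, hi₀⟩ := Finite.exists_max (fun i : Fin n => ∑ j, |(pprod G q) i j|)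
      exact lt_of_le_of_lt (ciSup_le hi₀) (habs i₀)
  refine ⟨hinf, ?_⟩
  -- spectral radius bound
  unfold specRad
  rcases Nat.eq_zero_or_pos n with rfl | hn
  · haveI : Subsingleton (Matrix (Fin 0) (Fin 0) ℂ) :=
      ⟨fun A B => by ext i j; exact i.elim0⟩
    haveI : IsEmpty (spectrum ℂ (((List.ofFn F).reverse.prod).map (algebraMap ℝ ℂ))) := by
      constructor
      rintro ⟨μ, hμ⟩
      exact (spectrum.mem_iff.mp hμ) (isUnit_of_subsingleton _)
    rw [Real.iSup_of_isEmpty]; norm_num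
  · haveI : Nonempty (Fin n) := ⟨⟨0, hn⟩⟩
    set M : Matrix (Fin n) (Fin n) ℝ := (List.ofFn F).reverse.prod with hMdef
    have hMabs : ∀ i, ∑ j, |M i j| < 1 := by intro i; rw [hprod]; exact habs i
    have hbdd : BddAbove (Set.range fun i : Fin n => ∑ j, |M i j|) :=
      Set.Finite.bddAbove (Set.finite_range _)
    have hb : ∀ μ ∈ spectrum ℂ (M.map (algebraMap ℝ ℂ)), ‖μ‖ ≤ infNorm M := by
      intro μ hμ
      rw [spectrum.mem_iff] at hμ
      have hdet : (algebraMap ℂ (Matrix (Fin n) (Fin n) ℂ) μ - M.map (algebraMap ℝ ℂ)).det = 0 := by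
        by_contra h
        exact hμ ((Matrix.isUnit_iff_isUnit_det _).mpr (isUnit_iff_ne_zero.mpr h))
      obtain ⟨v, hv0, hv⟩ := (Matrix.exists_mulVec_eq_zero_iff).mpr hdet
      have hev : (M.map (algebraMap ℝ ℂ)).mulVec v = μ • v := by
        rw [Matrix.sub_mulVec] at hv
        have h1 : (algebraMap ℂ (Matrix (Fin n) (Fin n) ℂ) μ).mulVec v = μ • v := by
          rw [Algebra.algebraMap_eq_smul_one, Matrix.smul_mulVec, Matrix.one_mulVec]
        rw [h1] at hv
        exact (sub_eq_zero.mp hv).symm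
      obtain ⟨i, hi⟩ := Finite.exists_max fun i : Fin n => ‖v i‖
      have hvi : 0 < ‖v i‖ := by
        obtain ⟨k, hk⟩ := Function.ne_iff.mp hv0
        exact lt_of_lt_of_le (norm_pos_iff.mpr hk) (hi k)
      have happ : ((M.map (algebraMap ℝ ℂ)).mulVec v) i = ∑ j, (M.map (algebraMap ℝ ℂ)) i j * v j := by
        simp [Matrix.mulVec, dotProduct]
      have key : ‖μ‖ * ‖v i‖ ≤ (∑ j, |M i j|) * ‖v i‖ := by
        calc ‖μ‖ * ‖v i‖
            = ‖∑ j, (M.map (algebraMap ℝ ℂ)) i j * v j‖ := by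
              rw [← norm_mul, ← happ, hev, Pi.smul_apply, smul_eq_mul]
          _ ≤ ∑ j, ‖(M.map (algebraMap ℝ ℂ)) i j * v j‖ :=
              norm_sum_le _ _
          _ = ∑ j, |M i j| * ‖v j‖ := by
              refine Finset.sum_congr rfl fun j _ => ?_
              rw [norm_mul]
              congr 1
              simp [Matrix.map_apply, Complex.norm_real]
          _ ≤ ∑ j, |M i j| * ‖v i‖ :=
              Finset.sum_le_sum fun j _ =>
                mul_le_mul_of_nonneg_left (hi j) (abs_nonneg _)
          _ = (∑ j, |M i j|) * ‖v i‖ := (Finset.sum_mul _ _ _).symm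
      have hle : ‖μ‖ ≤ ∑ j, |M i j| := le_of_mul_le_mul_right key hvi
      exact hle.trans (le_ciSup hbdd i)
    have h0 : 0 ≤ infNorm M := by
      refine le_trans ?_ (le_ciSup hbdd (⟨0, hn⟩ : Fin n))
      exact Finset.sum_nonneg fun j _ => abs_nonneg _
    exact lt_of_le_of_lt (Real.iSup_le (fun μ => hb μ.1 μ.2) h0) hinf
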